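/- Let k be a field. Suppose the Poincaré polynomial of (G, Re) is palindrome, and let m ∈ G be the unique element with ℓ(m) = d. Define a k-bilinear form B on the free k-module with basis G (finitely supported functions G →₀ k) by setting, on basis elements, B(g, h) = 1 if gh = m and ℓ(g) + ℓ(h) = d, and B(g, h) = 0 otherwise. Then B is nondegenerate: for every nonzero x there exists y with B(x, y) ≠ 0, and for every nonzero y there exists x with B(x, y) ≠ 0. (This is the nondegenerate associative bilinear form making the Hasse algebra H_G(Re) Frobenius.) -/

import Mathlib

open Classical

/-- The length of `g ∈ G` with respect to a generating set `Re`: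
the smallest `n` such that `g` is a product of `n` elements of `Re`. -/
noncomputable def wordLength {G : Type*} [Group G] (Re : Set G) (g : G) : ℕ :=
  sInf {n : ℕ | ∃ l : List G, (∀ x ∈ l, x ∈ Re) ∧ l.length = n ∧ l.prod = g}

section lemmas
variable {G : Type*} [Group G] [Finite G] {Re : Set G}

lemma mem_submonoid_closure (hgen : Subgroup.closure Re = ⊤) (g : G) :
    g ∈ Submonoid.closure Re := by
  have hg : g ∈ Subgroup.closure Re := by rw [hgen]; trivial
  induction hg using Subgroup.closure_induction with
  | mem x hx => exact Submonoid.subset_closure hx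
  | one => exact Submonoid.one_mem _
  | mul x y _ _ hx hy => exact Submonoid.mul_mem _ hx hy
  | inv x _ hx =>
      have h1 : x ^ orderOf x = 1 := pow_orderOf_eq_one x
      have hpos : 0 < orderOf x := orderOf_pos x
      have : x⁻¹ = x ^ (orderOf x - 1) := by
        rw [eq_comm, eq_inv_iff_mul_eq_one, ← pow_succ, Nat.sub_add_cancel hpos]
        exact h1
      rw [this]
      exact Submonoid.pow_mem _ hx _

lemma wordLength_spec (hgen : Subgroup.closure Re = ⊤) (g : G) :
    ∃ l : List G, (∀ x ∈ l, x ∈ Re) ∧ l.length = wordLength Re g ∧ l.prod = g := by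
  have : {n : ℕ | ∃ l : List G, (∀ x ∈ l, x ∈ Re) ∧ l.length = n ∧ l.prod = g}.Nonempty := by
    obtain ⟨l, hl, hp⟩ := Submonoid.exists_list_of_mem_closure (mem_submonoid_closure hgen g)
    exact ⟨l.length, l, hl, rfl, hp⟩
  exact Nat.sInf_mem this

lemma wordLength_mul_le (hgen : Subgroup.closure Re = ⊤) (g h : G) :
    wordLength Re (g * h) ≤ wordLength Re g + wordLength Re h := by
  obtain ⟨l1, h1, hl1, hp1⟩ := wordLength_spec hgen g
  obtain ⟨l2, h2, hl2, hp2⟩ := wordLength_spec hgen h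
  apply Nat.sInf_le
  exact ⟨l1 ++ l2, by
    intro x hx; rcases List.mem_append.1 hx with h | h
    exacts [h1 x h, h2 x h], by simp [hl1, hl2], by simp [hp1, hp2]⟩

end lemmas

lemma key_length {G : Type*} [Group G] [Finite G] {Re : Set G}
    (hgen : Subgroup.closure Re = ⊤) {d : ℕ} (hub : ∀ g : G, wordLength Re g ≤ d)
    (hpal : ∀ i ≤ d, Nat.card {g : G // wordLength Re g = i}
      = Nat.card {g : G // wordLength Re g = d - i})
    {m : G} (hm : wordLength Re m = d) (g : G) :
    wordLength Re g + wordLength Re (g⁻¹ * m) = d := by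
  classical
  haveI := Fintype.ofFinite G
  set ℓ := wordLength Re with hℓ
  set N : ℕ → Finset G := fun j => Finset.univ.filter (fun g => ℓ g = j) with hNdef
  have hN : ∀ j ≤ d, (N j).card = (N (d - j)).card := by
    intro j hj
    have := hpal j hj
    simpa [Nat.card_eq_fintype_card, Fintype.card_subtype, hNdef] using this
  set A : ℕ → Finset G := fun i => Finset.univ.filter (fun g => ℓ g ≤ i) with hAdef
  set B : ℕ → Finset G := fun i => Finset.univ.filter (fun g => d - i ≤ ℓ g) with hBdef
  have hinj : Function.Injective (fun g : G => g⁻¹ * m) := by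
    intro a b hab; simpa using mul_right_cancel hab
  have hmaps : ∀ i : ℕ, ∀ x ∈ A i, x⁻¹ * m ∈ B i := by
    intro i x hx
    simp only [hAdef, Finset.mem_filter] at hx
    have h1 : d ≤ ℓ x + ℓ (x⁻¹ * m) := by
      have := wordLength_mul_le hgen x (x⁻¹ * m)
      simp only [mul_inv_cancel_left] at this
      rw [← hm]; exact this
    simp only [hBdef, Finset.mem_filter, Finset.mem_univ, true_and]
    omega
  have hcardA : ∀ i, (A i).card = ∑ j ∈ Finset.range (i + 1), (N j).card := by
    intro i
    have : A i = (Finset.range (i + 1)).biUnion N := by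
      ext x
      simp only [hAdef, hNdef, Finset.mem_filter, Finset.mem_biUnion, Finset.mem_range,
        Finset.mem_univ, true_and, Nat.lt_succ_iff]
      constructor
      · intro h; exact ⟨ℓ x, h, rfl⟩
      · rintro ⟨j, hj, rfl⟩; exact hj
    rw [this, Finset.card_biUnion]
    intro a _ b _ hab
    simp only [Finset.disjoint_left, hNdef, Finset.mem_filter]
    rintro x ⟨_, rfl⟩ ⟨_, h⟩; exact hab h
  have hcardB : ∀ i ≤ d, (B i).card = ∑ j ∈ Finset.range (i + 1), (N (d - j)).card := by
    intro i hi
    have : B i = (Finset.range (i + 1)).biUnion (fun j => N (d - j)) := by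
      ext x
      simp only [hBdef, hNdef, Finset.mem_filter, Finset.mem_biUnion, Finset.mem_range,
        Finset.mem_univ, true_and, Nat.lt_succ_iff]
      constructor
      · intro h
        refine ⟨d - ℓ x, by omega, ?_⟩
        have := hub x
        omega
      · rintro ⟨j, hj, h⟩
        omega
    rw [this, Finset.card_biUnion]
    intro a ha b hb hab
    simp only [Finset.mem_coe, Finset.mem_range, Nat.lt_succ_iff] at ha hb
    simp only [Finset.disjoint_left, hNdef, Finset.mem_filter]
    rintro x ⟨_, hx1⟩ ⟨_, hx2⟩
    exact hab (by omega)
  have hcardeq : ∀ i ≤ d, (A i).card = (B i).card := by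
    intro i hi
    rw [hcardA, hcardB i hi]
    apply Finset.sum_congr rfl
    intro j hj
    simp only [Finset.mem_range, Nat.lt_succ_iff] at hj
    exact hN j (le_trans hj hi)
  have hBsub : ∀ i ≤ d, B i ⊆ (A i).image (fun g : G => g⁻¹ * m) := by
    intro i hi
    have himg : (A i).image (fun g : G => g⁻¹ * m) ⊆ B i := by
      intro y hy
      obtain ⟨x, hx, rfl⟩ := Finset.mem_image.1 hy
      exact hmaps i x hx
    have heq : (A i).image (fun g : G => g⁻¹ * m) = B i :=
      Finset.eq_of_subset_of_card_le himg
        (le_of_eq ((Finset.card_image_of_injective _ hinj).trans (hcardeq i hi)).symm)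
    exact heq ▸ Finset.Subset.refl _
  have hgB : g⁻¹ * m ∈ B (ℓ g) := hmaps _ g (by simp [hAdef])
  simp only [hBdef, Finset.mem_filter, Finset.mem_univ, true_and] at hgB
  by_contra hcon
  have hubg := hub g
  have hubm := hub (g⁻¹ * m)
  have h1 : 1 ≤ ℓ g := by omega
  have hmem : g⁻¹ * m ∈ B (ℓ g - 1) := by
    simp only [hBdef, Finset.mem_filter, Finset.mem_univ, true_and]; omega
  have hx := hBsub (ℓ g - 1) (by omega) hmem
  obtain ⟨x, hxA, hxe⟩ := Finset.mem_image.1 hx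
  have hxg : x = g := hinj hxe
  subst hxg
  simp only [hAdef, Finset.mem_filter, Finset.mem_univ, true_and] at hxA
  omega

/-- The bilinear form on the free `k`-module on `G` defined on basis elements by
`B(g, h) = 1` if `g * h = m` and `ℓ(g) + ℓ(h) = d`, and `B(g, h) = 0` otherwise. -/

noncomputable def hasseForm {G : Type*} [Group G] (Re : Set G) (m : G) (d : ℕ)
    {k : Type*} [Field k] (x y : G →₀ k) : k :=
  x.sum fun g a => y.sum fun h b =>
    if g * h = m ∧ wordLength Re g + wordLength Re h = d then a * b else 0

/-- If the Poincaré polynomial of `(G, Re)` is palindrome and `m` is the unique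
element of maximal length `d`, then the bilinear form `B` is nondegenerate on
both sides. This is the form making the Hasse algebra `H_G(Re)` Frobenius. -/
theorem hasseForm_nondegenerate
    {G : Type*} [Group G] [Finite G] (Re : Set G)
    (hgen : Subgroup.closure Re = ⊤) (hne : (1 : G) ∉ Re)
    (d : ℕ) (hub : ∀ g : G, wordLength Re g ≤ d) (hex : ∃ g : G, wordLength Re g = d)
    (hpal : ∀ i ≤ d, Nat.card {g : G // wordLength Re g = i}
      = Nat.card {g : G // wordLength Re g = d - i})
    (m : G) (hm : wordLength Re m = d)
    (hmu : ∀ g : G, wordLength Re g = d → g = m)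
    (k : Type*) [Field k] :
    (∀ x : G →₀ k, x ≠ 0 → ∃ y : G →₀ k, hasseForm Re m d x y ≠ 0) ∧
    (∀ y : G →₀ k, y ≠ 0 → ∃ x : G →₀ k, hasseForm Re m d x y ≠ 0) := by
  classical
  have key : ∀ g : G, wordLength Re g + wordLength Re (g⁻¹ * m) = d :=
    fun g => key_length hgen hub hpal hm g
  constructor
  · intro x hx
    obtain ⟨g, hg⟩ := Finsupp.ne_iff.1 hx
    rw [Finsupp.coe_zero, Pi.zero_apply] at hg
    refine ⟨Finsupp.single (g⁻¹ * m) 1, ?_⟩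
    unfold hasseForm
    have hstep : ∀ g' : G, ∀ a : k,
        ((Finsupp.single (g⁻¹ * m) (1:k)).sum fun h b =>
          if g' * h = m ∧ wordLength Re g' + wordLength Re h = d then a * b else 0)
        = if g' = g then a else 0 := by
      intro g' a
      rw [Finsupp.sum_single_index (by simp)]
      have hc : g' * (g⁻¹ * m) = m ↔ g' = g := by
        constructor
        · intro h
          have : g' * (g⁻¹ * m) = g * (g⁻¹ * m) := by rw [h]; simp
          exact mul_right_cancel this
        · rintro rfl; simp
      by_cases hgg : g' = g
      · subst hgg
        simp [hc, key g']
      · simp [hgg, fun h => hgg (hc.1 h)]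
        intro h; exact absurd (hc.1 h) hgg
    simp only [hstep]
    rw [Finsupp.sum_ite_eq']
    simpa [Finsupp.mem_support_iff, hg] using hg
  · intro y hy
    obtain ⟨h, hh⟩ := Finsupp.ne_iff.1 hy
    rw [Finsupp.coe_zero, Pi.zero_apply] at hh
    refine ⟨Finsupp.single (m * h⁻¹) 1, ?_⟩
    unfold hasseForm
    rw [Finsupp.sum_single_index (by simp)]
    have hkey2 : wordLength Re (m * h⁻¹) + wordLength Re h = d := by
      have := key (m * h⁻¹)
      simpa [mul_assoc] using this
    have hstep : ∀ h' : G, ∀ b : k,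
        (if (m * h⁻¹) * h' = m ∧ wordLength Re (m * h⁻¹) + wordLength Re h' = d
          then 1 * b else 0) = if h' = h then b else 0 := by
      intro h' b
      have hc : (m * h⁻¹) * h' = m ↔ h' = h := by
        constructor
        · intro he
          have : (m * h⁻¹) * h' = (m * h⁻¹) * h := by rw [he]; simp
          exact mul_left_cancel this
        · rintro rfl; simp
      by_cases hgg : h' = h
      · subst hgg; simp [hc, hkey2]
      · simp [hgg]
        intro he; exact absurd (hc.1 he) hgg
    simp only [hstep]
    rw [Finsupp.sum_ite_eq']
    simpa [Finsupp.mem_support_iff, hh] using hh
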